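/- Let Ω be the subshift of a Sturmian word, i.e., the shift-orbit closure of an aperiodic word of factor complexity n + 1. If ω, ω', ω'' ∈ Ω satisfy T^{n₀}(ω) = T^{n₀}(ω') = T^{n₀}(ω'') for some n₀ ≥ 1 (T the shift), then at least two of ω, ω', ω'' are equal; i.e., any word in a Sturmian subshift has at most two preimages under T^{n₀} within the subshift. -/

import Mathlib

def Occ {A : Type*} (x : ℕ → A) (u : List A) : Set ℕ :=
  {n | u = (List.range u.length).map fun i => x (n + i)}

def IsPref {A : Type*} (u : List A) (x : ℕ → A) : Prop :=
  u = (List.range u.length).map x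

def IsFactor {A : Type*} (u : List A) (x : ℕ → A) : Prop :=
  ∃ n, n ∈ Occ x u

noncomputable def Complexity {A : Type*} (x : ℕ → A) (n : ℕ) : ℕ :=
  Set.ncard {u : List A | u.length = n ∧ IsFactor u x}

def UltPeriodic {A : Type*} (x : ℕ → A) : Prop :=
  ∃ p : ℕ, 0 < p ∧ ∃ N : ℕ, ∀ n, N ≤ n → x (n + p) = x n

namespace Sturm

/-- the window of `w` starting at `k`, of length `n` -/
def blk (w : ℕ → Fin 2) (k n : ℕ) : List (Fin 2) :=
  (List.range n).map fun i => w (k + i)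

@[simp] lemma blk_length (w : ℕ → Fin 2) (k n : ℕ) : (blk w k n).length = n := by
  simp [blk]

@[simp] lemma blk_zero (w : ℕ → Fin 2) (k : ℕ) : blk w k 0 = [] := rfl

lemma blk_getElem (w : ℕ → Fin 2) (k n i : ℕ) (h : i < n) :
    (blk w k n)[i]'(by simpa using h) = w (k + i) := by
  simp [blk]

lemma blk_congr {w w' : ℕ → Fin 2} {k k' n : ℕ}
    (h : ∀ i < n, w (k + i) = w' (k' + i)) : blk w k n = blk w' k' n := by
  apply List.ext_getElem (by simp)
  intro i h1 h2
  simp only [blk_length] at h1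
  rw [blk_getElem _ _ _ _ h1, blk_getElem _ _ _ _ h1]
  exact h i h1

lemma blk_eq_iff {w w' : ℕ → Fin 2} {k k' n : ℕ} :
    blk w k n = blk w' k' n ↔ ∀ i < n, w (k + i) = w' (k' + i) := by
  constructor
  · intro h i hi
    have := congrArg (fun l => l[i]?) h
    simpa [blk, List.getElem?_map, List.getElem?_range hi] using this
  · exact blk_congr

lemma blk_succ (w : ℕ → Fin 2) (k n : ℕ) :
    blk w k (n + 1) = blk w k n ++ [w (k + n)] := by
  simp [blk, List.range_succ]

lemma blk_cons (w : ℕ → Fin 2) (k n : ℕ) :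
    blk w k (n + 1) = w k :: blk w (k + 1) n := by
  simp only [blk, List.range_succ_eq_map, List.map_cons, List.map_map]
  refine congrArg₂ _ (by simp) (List.map_congr_left fun a _ => ?_)
  show w (k + (a+1)) = w (k + 1 + a)
  congr 1
  omega

/-- the set of factors of length n -/
def Fac (ω : ℕ → Fin 2) (n : ℕ) : Set (List (Fin 2)) :=
  {u | u.length = n ∧ IsFactor u ω}

lemma isFactor_iff {u : List (Fin 2)} {ω : ℕ → Fin 2} :
    IsFactor u ω ↔ ∃ j, u = blk ω j u.length := Iff.rfl

lemma blk_mem_Fac (ω : ℕ → Fin 2) (j n : ℕ) : blk ω j n ∈ Fac ω n := by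
  refine ⟨by simp, ⟨j, ?_⟩⟩
  show blk ω j n = blk ω j (blk ω j n).length
  simp

lemma mem_Fac_iff {ω : ℕ → Fin 2} {u : List (Fin 2)} {n : ℕ} :
    u ∈ Fac ω n ↔ ∃ j, u = blk ω j n := by
  constructor
  · rintro ⟨hl, j, hj⟩
    refine ⟨j, ?_⟩
    have : u = (List.range u.length).map fun i => ω (j + i) := hj
    rw [hl] at this
    exact this
  · rintro ⟨j, rfl⟩
    exact blk_mem_Fac ω j n

lemma blk_eq_ofFn (w : ℕ → Fin 2) (k n : ℕ) :
    blk w k n = List.ofFn (fun i : Fin n => w (k + i)) := by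
  apply List.ext_getElem (by simp)
  intro i h1 h2
  simp only [blk_length] at h1
  rw [blk_getElem _ _ _ _ h1]
  simp

lemma finite_Fac (ω : ℕ → Fin 2) (n : ℕ) : (Fac ω n).Finite := by
  apply Set.Finite.subset (Set.finite_range (fun f : Fin n → Fin 2 => List.ofFn f))
  rintro u hu
  rw [mem_Fac_iff] at hu
  obtain ⟨j, rfl⟩ := hu
  exact ⟨fun i => ω (j + i), (blk_eq_ofFn ω j n).symm⟩

lemma complexity_eq (ω : ℕ → Fin 2) (n : ℕ) :
    Complexity ω n = (Fac ω n).ncard := rfl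

/-- sub-blocks of a word whose prefixes are factors of ω are factors of ω -/
lemma blk_factor_of_pref {x ω : ℕ → Fin 2}
    (hx : ∀ u : List (Fin 2), IsPref u x → IsFactor u ω) (k n : ℕ) :
    ∃ j, blk x k n = blk ω j n := by
  have hpref : IsPref (blk x 0 (k + n)) x := by
    show blk x 0 (k+n) = (List.range (blk x 0 (k+n)).length).map x
    simp only [blk_length]
    simp [blk]
  obtain ⟨j, hj⟩ := hx _ hpref
  have hj' : blk x 0 (k + n) = blk ω j (k + n) := by
    have : blk x 0 (k+n) = (List.range (blk x 0 (k+n)).length).map fun i => ω (j + i) := hj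
    simp only [blk_length] at this; exact this
  have hpt := blk_eq_iff.mp hj' 
  refine ⟨j + k, blk_congr fun i hi => ?_⟩
  have := hpt (k + i) (by omega)
  simpa [Nat.add_assoc, Nat.zero_add] using this

variable {ω : ℕ → Fin 2}

lemma dropLast_mem_Fac {v : List (Fin 2)} {n : ℕ} (h : v ∈ Fac ω (n+1)) :
    v.dropLast ∈ Fac ω n := by
  rw [mem_Fac_iff] at h ⊢
  obtain ⟨j, rfl⟩ := h
  refine ⟨j, ?_⟩
  rw [blk_succ, List.dropLast_concat]

lemma exists_right_ext {u : List (Fin 2)} {n : ℕ} (h : u ∈ Fac ω n) :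
    ∃ e : Fin 2, u ++ [e] ∈ Fac ω (n+1) := by
  rw [mem_Fac_iff] at h
  obtain ⟨j, rfl⟩ := h
  exact ⟨ω (j + n), by rw [← blk_succ]; exact blk_mem_Fac ω j (n+1)⟩

/-- there cannot be two distinct right special factors of the same length -/
lemma no_two_right_special (hst : ∀ n, Complexity ω n = n + 1) {n : ℕ}
    {u v : List (Fin 2)} (hul : u.length = n) (hvl : v.length = n) (huv : u ≠ v)
    (hu : ∀ e : Fin 2, u ++ [e] ∈ Fac ω (n+1))
    (hv : ∀ e : Fin 2, v ++ [e] ∈ Fac ω (n+1)) : False := by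
  classical
  set S := (finite_Fac ω n).toFinset with hSdef
  set T := (finite_Fac ω (n+1)).toFinset with hTdef
  have hScard : S.card = n + 1 := by
    rw [← Set.ncard_eq_toFinset_card _ (finite_Fac ω n), ← complexity_eq, hst]
  have hTcard : T.card = n + 2 := by
    rw [← Set.ncard_eq_toFinset_card _ (finite_Fac ω (n+1)), ← complexity_eq, hst]
  have hmapsto : ∀ w ∈ T, w.dropLast ∈ S := by
    intro w hw
    rw [hTdef, Set.Finite.mem_toFinset] at hw
    rw [hSdef, Set.Finite.mem_toFinset]
    exact dropLast_mem_Fac hw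
  have hsum : T.card = ∑ w ∈ S, (T.filter (fun a => a.dropLast = w)).card :=
    Finset.card_eq_sum_card_fiberwise hmapsto
  -- u, v ∈ S
  have huS : u ∈ S := by
    rw [hSdef, Set.Finite.mem_toFinset]
    have := dropLast_mem_Fac (hu 0)
    rwa [List.dropLast_concat] at this
  have hvS : v ∈ S := by
    rw [hSdef, Set.Finite.mem_toFinset]
    have := dropLast_mem_Fac (hv 0)
    rwa [List.dropLast_concat] at this
  have hpair : ({u, v} : Finset (List (Fin 2))) ⊆ S := by
    intro w hw
    rcases Finset.mem_insert.mp hw with rfl | hw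
    · exact huS
    · rwa [Finset.mem_singleton.mp hw]
  -- fibers over u and v have ≥ 2 elements
  have hfib2 : ∀ w : List (Fin 2), (∀ e : Fin 2, w ++ [e] ∈ Fac ω (n+1)) →
      2 ≤ (T.filter (fun a => a.dropLast = w)).card := by
    intro w hw
    have hsub : ({w ++ [0], w ++ [1]} : Finset (List (Fin 2))) ⊆
        T.filter (fun a => a.dropLast = w) := by
      intro a ha
      rcases Finset.mem_insert.mp ha with rfl | ha
      · exact Finset.mem_filter.mpr ⟨(Set.Finite.mem_toFinset _).mpr (hw 0),
          List.dropLast_concat⟩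
      · rw [Finset.mem_singleton.mp ha]
        exact Finset.mem_filter.mpr ⟨(Set.Finite.mem_toFinset _).mpr (hw 1),
          List.dropLast_concat⟩
    calc 2 = ({w ++ [0], w ++ [1]} : Finset (List (Fin 2))).card := by
              rw [Finset.card_pair (by simp)]
      _ ≤ _ := Finset.card_le_card hsub
  -- fibers are nonempty
  have hfib1 : ∀ w ∈ S, 1 ≤ (T.filter (fun a => a.dropLast = w)).card := by
    intro w hw
    rw [hSdef, Set.Finite.mem_toFinset] at hw
    obtain ⟨e, he⟩ := exists_right_ext hw
    refine Finset.card_pos.mpr ⟨w ++ [e], Finset.mem_filter.mpr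
      ⟨(Set.Finite.mem_toFinset _).mpr he, List.dropLast_concat⟩⟩
  have key : n + 3 ≤ T.card := by
    rw [hsum, ← Finset.sum_sdiff hpair]
    have h1 : (S \ {u, v}).card ≤ ∑ w ∈ S \ {u, v}, (T.filter (fun a => a.dropLast = w)).card := by
      rw [Finset.card_eq_sum_ones]
      apply Finset.sum_le_sum
      intro w hw
      exact hfib1 w (Finset.mem_sdiff.mp hw).1
    have h2 : (S \ {u, v}).card = n - 1 := by
      rw [Finset.card_sdiff_of_subset hpair, hScard, Finset.card_pair huv]; omega
    have h3 : 4 ≤ ∑ w ∈ ({u, v} : Finset (List (Fin 2))), (T.filter (fun a => a.dropLast = w)).card := by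
      rw [Finset.sum_pair huv]
      have := hfib2 u hu
      have := hfib2 v hv
      omega
    have hn1 : 1 ≤ n := by
      rcases Nat.eq_zero_or_pos n with rfl | h
      · exact absurd (by rw [List.length_eq_zero_iff.mp hul, List.length_eq_zero_iff.mp hvl]) huv
      · exact h
    omega
  omega

/-- two distinct left special factors of length n force the complexity of the
shifted word to drop to ≤ n -/
lemma two_left_special_shift (hst : ∀ n, Complexity ω n = n + 1) {n : ℕ}
    {u v : List (Fin 2)} (hul : u.length = n) (hvl : v.length = n) (huv : u ≠ v)
    (hu : ∀ e : Fin 2, e :: u ∈ Fac ω (n+1))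
    (hv : ∀ e : Fin 2, e :: v ∈ Fac ω (n+1)) :
    Complexity (fun i => ω (i+1)) n ≤ n := by
  classical
  set ω' : ℕ → Fin 2 := fun i => ω (i+1) with hω'
  set T := (finite_Fac ω (n+1)).toFinset with hTdef
  have hTcard : T.card = n + 2 := by
    rw [← Set.ncard_eq_toFinset_card _ (finite_Fac ω (n+1)), ← complexity_eq, hst]
  set T' : Finset (List (Fin 2)) := T \ {(1 : Fin 2) :: u, (1 : Fin 2) :: v} with hT'def
  have hsubpair : ({(1 : Fin 2) :: u, (1 : Fin 2) :: v} : Finset (List (Fin 2))) ⊆ T := by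
    intro a ha
    rcases Finset.mem_insert.mp ha with rfl | ha
    · exact (Set.Finite.mem_toFinset _).mpr (hu 1)
    · rw [Finset.mem_singleton.mp ha]
      exact (Set.Finite.mem_toFinset _).mpr (hv 1)
  have hT'card : T'.card = n := by
    rw [hT'def, Finset.card_sdiff_of_subset hsubpair, hTcard, Finset.card_pair (by
      simp only [ne_eq, List.cons.injEq, true_and]; exact huv)]
    omega
  have hsub : Fac ω' n ⊆ List.tail '' (↑T' : Set (List (Fin 2))) := by
    intro w hw
    rw [mem_Fac_iff] at hw
    obtain ⟨j, rfl⟩ := hw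
    have hblk : blk ω' j n = blk ω (j+1) n := blk_congr (fun i _ => by
      show ω (j + i + 1) = ω (j + 1 + i); congr 1; omega)
    by_cases hwu : blk ω' j n = u
    · refine ⟨(0 : Fin 2) :: u, ?_, by rw [hwu]; rfl⟩
      simp only [hT'def, Finset.coe_sdiff, Set.mem_diff]
      constructor
      · exact (Set.Finite.mem_toFinset _).mpr (hu 0)
      · simp
    · by_cases hwv : blk ω' j n = v
      · refine ⟨(0 : Fin 2) :: v, ?_, by rw [hwv]; rfl⟩
        simp only [hT'def, Finset.coe_sdiff, Set.mem_diff]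
        constructor
        · exact (Set.Finite.mem_toFinset _).mpr (hv 0)
        · simp
      · refine ⟨ω j :: blk ω' j n, ?_, rfl⟩
        simp only [hT'def, Finset.coe_sdiff, Set.mem_diff]
        constructor
        · rw [hblk, ← blk_cons]
          exact (Set.Finite.mem_toFinset _).mpr (blk_mem_Fac ω j (n+1))
        · intro hmem
          simp only [Finset.coe_insert, Set.mem_insert_iff, Finset.coe_singleton,
            Set.mem_singleton_iff, List.cons.injEq] at hmem
          rcases hmem with ⟨_, h⟩ | ⟨_, h⟩
          · exact hwu h
          · exact hwv h
  calc Complexity ω' n = (Fac ω' n).ncard := complexity_eq ω' n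
    _ ≤ (List.tail '' (↑T' : Set (List (Fin 2)))).ncard :=
        Set.ncard_le_ncard hsub (Set.Finite.image _ (T'.finite_toSet))
    _ ≤ (↑T' : Set (List (Fin 2))).ncard := Set.ncard_image_le T'.finite_toSet
    _ = n := by rw [Set.ncard_coe_finset, hT'card]

lemma complexity_zero (w : ℕ → Fin 2) : Complexity w 0 = 1 := by
  have : {u : List (Fin 2) | u.length = 0 ∧ IsFactor u w} = {([] : List (Fin 2))} := by
    ext u
    simp only [Set.mem_setOf_eq, Set.mem_singleton_iff, List.length_eq_zero_iff]
    constructor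
    · rintro ⟨h, -⟩; exact h
    · rintro rfl
      exact ⟨rfl, ⟨0, by simp [Occ]⟩⟩
  rw [Complexity, this, Set.ncard_singleton]

lemma complexity_mono (w : ℕ → Fin 2) (k : ℕ) :
    Complexity w k ≤ Complexity w (k + 1) := by
  have hsub : Fac w k ⊆ List.dropLast '' Fac w (k+1) := by
    intro u hu
    obtain ⟨e, he⟩ := exists_right_ext hu
    exact ⟨u ++ [e], he, List.dropLast_concat⟩
  calc Complexity w k = (Fac w k).ncard := rfl
    _ ≤ (List.dropLast '' Fac w (k+1)).ncard :=
        Set.ncard_le_ncard hsub ((finite_Fac w (k+1)).image _)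
    _ ≤ (Fac w (k+1)).ncard := Set.ncard_image_le (finite_Fac w (k+1))
    _ = Complexity w (k+1) := rfl

lemma exists_eq_level {w : ℕ → Fin 2} {m : ℕ} (h : Complexity w m ≤ m) :
    ∃ k, Complexity w (k+1) ≤ Complexity w k := by
  by_contra hc
  push_neg at hc
  have grow : ∀ k, k + 1 ≤ Complexity w k := by
    intro k
    induction k with
    | zero => rw [complexity_zero]
    | succ k ih => exact lt_of_lt_of_le (lt_of_le_of_lt ih (hc k)) le_rfl
  have := grow m
  omega

/-- right determinism at an equality level -/
lemma determinism {w : ℕ → Fin 2} {k : ℕ}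
    (h : Complexity w (k+1) ≤ Complexity w k) :
    ∀ i i', (∀ t, t < k → w (i + t) = w (i' + t)) → w (i + k) = w (i' + k) := by
  classical
  intro i i' hag
  set S := (finite_Fac w k).toFinset with hSdef
  set T := (finite_Fac w (k+1)).toFinset with hTdef
  have himg : T.image List.dropLast = S := by
    apply Finset.ext
    intro a
    simp only [Finset.mem_image, hSdef, hTdef, Set.Finite.mem_toFinset]
    constructor
    · rintro ⟨b, hb, rfl⟩
      exact dropLast_mem_Fac hb
    · intro ha
      obtain ⟨e, he⟩ := exists_right_ext ha
      exact ⟨a ++ [e], he, List.dropLast_concat⟩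
  have hScard : S.card = Complexity w k := by
    rw [hSdef, ← Set.ncard_eq_toFinset_card _ (finite_Fac w k)]; rfl
  have hTcard : T.card = Complexity w (k+1) := by
    rw [hTdef, ← Set.ncard_eq_toFinset_card _ (finite_Fac w (k+1))]; rfl
  have hinj : Set.InjOn List.dropLast (↑T : Set (List (Fin 2))) := by
    rw [← Finset.card_image_iff]
    have h1 : (T.image List.dropLast).card ≤ T.card := Finset.card_image_le
    have h2 : (T.image List.dropLast).card = S.card := by rw [himg]
    omega
  have hL : blk w i (k+1) ∈ (↑T : Set (List (Fin 2))) := by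
    simp only [hTdef, Set.Finite.coe_toFinset]
    exact blk_mem_Fac w i (k+1)
  have hL' : blk w i' (k+1) ∈ (↑T : Set (List (Fin 2))) := by
    simp only [hTdef, Set.Finite.coe_toFinset]
    exact blk_mem_Fac w i' (k+1)
  have hdL : (blk w i (k+1)).dropLast = (blk w i' (k+1)).dropLast := by
    rw [blk_succ, blk_succ, List.dropLast_concat, List.dropLast_concat]
    exact blk_congr hag
  have := hinj hL hL' hdL
  have hle := blk_eq_iff.mp this k (by omega)
  exact hle

/-- Morse–Hedlund: complexity ≤ n for some n implies ultimately periodic. -/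
theorem morse_hedlund {w : ℕ → Fin 2} {m : ℕ} (h : Complexity w m ≤ m) :
    UltPeriodic w := by
  obtain ⟨k, hk⟩ := exists_eq_level h
  have det := determinism hk
  obtain ⟨j, l, hjl, hfeq⟩ :=
    Finite.exists_ne_map_eq_of_infinite (fun j : ℕ => fun t : Fin k => w (j + t))
  wlog hlt : j < l generalizing j l
  · exact this l j (Ne.symm hjl) hfeq.symm (by omega)
  have prop : ∀ i, w (j + i) = w (l + i) := by
    intro i
    induction i using Nat.strong_induction_on with
    | _ i ih =>
      rcases Nat.lt_or_ge i k with hik | hik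
      · exact congrFun hfeq ⟨i, hik⟩
      · have := det (j + (i - k)) (l + (i - k)) (fun t ht => by
          have := ih (i - k + t) (by omega)
          have e1 : j + (i - k) + t = j + (i - k + t) := by omega
          have e2 : l + (i - k) + t = l + (i - k + t) := by omega
          rw [e1, e2]; exact this)
        have e1 : j + (i - k) + k = j + i := by omega
        have e2 : l + (i - k) + k = l + i := by omega
        rwa [e1, e2] at this
  exact ⟨l - j, by omega, j, fun n hn => by
    have := prop (n - j)
    have e1 : j + (n - j) = n := by omega
    have e2 : l + (n - j) = n + (l - j) := by omega
    rw [e1, e2] at this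
    exact this.symm⟩

lemma ultPeriodic_of_shift {w : ℕ → Fin 2}
    (h : UltPeriodic (fun i => w (i + 1))) : UltPeriodic w := by
  obtain ⟨p, hp, N, hN⟩ := h
  refine ⟨p, hp, N + 1, fun n hn => ?_⟩
  have h2 := hN (n - 1) (by omega)
  simp only at h2
  have e1 : n - 1 + p + 1 = n + p := by omega
  have e2 : n - 1 + 1 = n := by omega
  rwa [e1, e2] at h2

lemma fin2_cover : ∀ (p q e : Fin 2), p ≠ q → e = p ∨ e = q := by decide

lemma period_mul {P : ℕ → Fin 2} {s : ℕ} (h : ∀ i, P (i + s) = P i) :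
    ∀ k i, P (i + s * k) = P i := by
  intro k
  induction k with
  | zero => simp
  | succ k ih =>
    intro i
    have e : i + s * (k + 1) = (i + s * k) + s := by ring
    rw [e, h, ih]

lemma period_gcd {P : ℕ → Fin 2} :
    ∀ s t, (∀ i, P (i + s) = P i) → (∀ i, P (i + t) = P i) →
    ∀ i, P (i + Nat.gcd s t) = P i := by
  intro s
  induction s using Nat.strong_induction_on with
  | _ s ih =>
    intro t hs ht i
    rcases Nat.eq_zero_or_pos s with rfl | hpos
    · simpa [Nat.gcd_zero_left] using ht i
    · rw [Nat.gcd_rec s t]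
      refine ih (t % s) (Nat.mod_lt _ hpos) s ?_ hs i
      intro i'
      have h1 : i' + t % s + s * (t / s) = i' + t := by
        have := Nat.mod_add_div t s
        omega
      have h2 := period_mul hs (t / s) (i' + t % s)
      rw [h1] at h2
      rw [← h2, ht]

lemma key (ω : ℕ → Fin 2) (hap : ¬ UltPeriodic ω) (hst : ∀ n, Complexity ω n = n + 1)
    (a b c : ℕ → Fin 2)
    (ha : ∀ u : List (Fin 2), IsPref u a → IsFactor u ω)
    (hb : ∀ u : List (Fin 2), IsPref u b → IsFactor u ω)
    (hc : ∀ u : List (Fin 2), IsPref u c → IsFactor u ω)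
    (p m : ℕ) (hpm : p < m)
    (hab_p : a p ≠ b p) (hab_above : ∀ i, p < i → a i = b i)
    (hac_m : a m ≠ c m) (hac_above : ∀ i, m < i → a i = c i) : False := by
  classical
  have Fa : ∀ k n, blk a k n ∈ Fac ω n := by
    intro k n
    obtain ⟨j, hj⟩ := blk_factor_of_pref ha k n
    rw [mem_Fac_iff]; exact ⟨j, hj⟩
  have Fb : ∀ k n, blk b k n ∈ Fac ω n := by
    intro k n
    obtain ⟨j, hj⟩ := blk_factor_of_pref hb k n
    rw [mem_Fac_iff]; exact ⟨j, hj⟩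
  have Fc : ∀ k n, blk c k n ∈ Fac ω n := by
    intro k n
    obtain ⟨j, hj⟩ := blk_factor_of_pref hc k n
    rw [mem_Fac_iff]; exact ⟨j, hj⟩
  -- the tails after m agree between a and c, after p agree between a and b
  have hca_tail : ∀ n, blk c (m+1) n = blk a (m+1) n :=
    fun n => blk_congr (fun i _ => (hac_above (m+1+i) (by omega)).symm)
  have hba_tail : ∀ n, blk b (p+1) n = blk a (p+1) n :=
    fun n => blk_congr (fun i _ => (hab_above (p+1+i) (by omega)).symm)
  -- u-family: both letters extend blk a (m+1) n on the left
  have hLu : ∀ n (e : Fin 2), e :: blk a (m+1) n ∈ Fac ω (n+1) := by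
    intro n e
    rcases fin2_cover (a m) (c m) e hac_m with rfl | rfl
    · rw [← blk_cons]; exact Fa m (n+1)
    · rw [← hca_tail, ← blk_cons]; exact Fc m (n+1)
  -- v-family: both letters extend blk a (p+1) n on the left
  have hLv : ∀ n (e : Fin 2), e :: blk a (p+1) n ∈ Fac ω (n+1) := by
    intro n e
    rcases fin2_cover (a p) (b p) e hab_p with rfl | rfl
    · rw [← blk_cons]; exact Fa p (n+1)
    · rw [← hba_tail, ← blk_cons]; exact Fb p (n+1)
  by_cases hper : ∀ i, a (m + 1 + i) = a (p + 1 + i)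
  · -- degenerate case: the common tail is periodic
    set P : ℕ → Fin 2 := fun i => a (p + 1 + i) with hP
    set q : ℕ := m - p with hq
    have hq1 : 1 ≤ q := by omega
    have hperq : ∀ i, P (i + q) = P i := by
      intro i
      show a (p + 1 + (i + q)) = a (p + 1 + i)
      have e1 : p + 1 + (i + q) = m + 1 + i := by omega
      rw [e1, hper i]
    have hex : ∃ t, 0 < t ∧ ∀ i, P (i + t) = P i := ⟨q, by omega, hperq⟩
    set q₀ : ℕ := Nat.find hex with hq₀
    obtain ⟨hq₀pos, hq₀per⟩ := Nat.find_spec hex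
    have hq₀min : ∀ t, 0 < t → (∀ i, P (i + t) = P i) → q₀ ≤ t := by
      intro t h1 h2
      by_contra hcon
      exact Nat.find_min hex (by omega) ⟨h1, h2⟩
    have hq₀q : q₀ ≤ q := hq₀min q (by omega) hperq
    -- q₀ divides q
    have hdvd : q₀ ∣ q := by
      have hgcdper := period_gcd q₀ q hq₀per hperq
      have hgcdpos : 0 < Nat.gcd q₀ q := Nat.gcd_pos_of_pos_left q hq₀pos
      have h1 : q₀ ≤ Nat.gcd q₀ q := hq₀min _ hgcdpos hgcdper
      have h2 : Nat.gcd q₀ q ∣ q₀ := Nat.gcd_dvd_left q₀ q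
      have h3 : Nat.gcd q₀ q ≤ q₀ := Nat.le_of_dvd hq₀pos h2
      have : Nat.gcd q₀ q = q₀ := by omega
      rw [← this]; exact Nat.gcd_dvd_right q₀ q
    -- value of a at m is P (q₀ - 1)
    have ham : a m = P (q₀ - 1) := by
      have e1 : a m = P (q - 1) := by
        show a m = a (p + 1 + (q - 1))
        congr 1; omega
      have e2 : P (q - 1) = P (q₀ - 1) := by
        obtain ⟨t, ht⟩ := hdvd
        have htpos : 1 ≤ t := by
          rcases Nat.eq_zero_or_pos t with rfl | h; · omega
          · exact h
        have e3 : q - 1 = (q₀ - 1) + q₀ * (t - 1) := by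
          have : q = q₀ * t := ht
          have : q₀ * t = q₀ * (t-1) + q₀ := by
            have : t = (t - 1) + 1 := by omega
            nth_rewrite 1 [this]; ring
          omega
        rw [e3, period_mul hq₀per]
      rw [e1, e2]
    set γ : Fin 2 := c m with hγ
    have hγδ : γ ≠ P (q₀ - 1) := by rw [← ham]; exact fun h => hac_m h.symm
    -- windows of P are factors
    have hPblk : ∀ r n, blk P r n = blk a (p + 1 + r) n :=
      fun r n => blk_congr (fun i _ => by show a (p+1+(r+i)) = _; congr 1; omega)
    have hPfac : ∀ r n, blk P r n ∈ Fac ω n := fun r n => by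
      rw [hPblk]; exact Fa _ n
    -- the defect words γ :: (prefix of P) are factors
    have htailP : ∀ n, blk a (m+1) n = blk P 0 n := by
      intro n
      apply blk_congr
      intro i _
      show a (m+1+i) = P (0 + i)
      rw [hper i]
      show a (p+1+i) = a (p+1+(0+i))
      congr 1; omega
    have hγfac : ∀ n, γ :: blk P 0 n ∈ Fac ω (n+1) := by
      intro n
      have := hLu n γ
      rwa [htailP] at this
    -- phase separation
    have hne_phase : ∀ r, 0 < r ∧ r < q₀ → ∃ i, P (r + i) ≠ P i := by
      rintro r ⟨h1, h2⟩
      by_contra hcon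
      push_neg at hcon
      have : q₀ ≤ r := hq₀min r h1 (fun i => by rw [Nat.add_comm]; exact hcon i)
      omega
    set n₁ : ℕ := 1 + (Finset.range q₀).sup
        (fun r => if h : 0 < r ∧ r < q₀ then Nat.find (hne_phase r h) else 0) with hn₁
    have hsep : ∀ r, 0 < r → r < q₀ → ∃ i < n₁, P (r + i) ≠ P i := by
      intro r h1 h2
      refine ⟨Nat.find (hne_phase r ⟨h1, h2⟩), ?_, Nat.find_spec (hne_phase r ⟨h1, h2⟩)⟩
      have h0 : Nat.find (hne_phase r ⟨h1, h2⟩) =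
          (if h : 0 < r ∧ r < q₀ then Nat.find (hne_phase r h) else 0) := by
        rw [dif_pos (show 0 < r ∧ r < q₀ from ⟨h1, h2⟩)]
      have hle := Finset.le_sup
        (f := fun r => if h : 0 < r ∧ r < q₀ then Nat.find (hne_phase r h) else 0)
        (Finset.mem_range.mpr h2)
      have hle' : (if h : 0 < r ∧ r < q₀ then Nat.find (hne_phase r h) else 0) ≤
          (Finset.range q₀).sup
            (fun r => if h : 0 < r ∧ r < q₀ then Nat.find (hne_phase r h) else 0) := hle
      omega
    -- pinning lemma
    have hpin : ∀ s n, n₁ ≤ n → (∀ i, i < n → P (s + i) = P i) → s % q₀ = 0 := by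
      intro s n hn hs
      by_contra hcon
      have hr2 : s % q₀ < q₀ := Nat.mod_lt _ hq₀pos
      obtain ⟨i, hi, hnei⟩ := hsep (s % q₀) (by omega) hr2
      apply hnei
      have e1 : s % q₀ + i + q₀ * (s / q₀) = s + i := by
        have := Nat.mod_add_div s q₀
        omega
      have h2 := period_mul hq₀per (s / q₀) (s % q₀ + i)
      rw [e1] at h2
      rw [← h2]
      exact hs i (by omega)
    -- Claim B: some window of P is right special
    have hB : ∀ l : ℕ, ∃ r, ∀ e : Fin 2, blk P r l ++ [e] ∈ Fac ω (l+1) := by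
      intro l
      by_contra hcon
      push_neg at hcon
      have hforce : ∀ r (e : Fin 2), blk P r l ++ [e] ∈ Fac ω (l+1) → e = P (r + l) := by
        intro r e he
        by_contra hne
        obtain ⟨e₀, he₀⟩ := hcon r
        have hnat : blk P r l ++ [P (r + l)] ∈ Fac ω (l+1) := by
          rw [← blk_succ]; exact hPfac r (l+1)
        rcases fin2_cover e (P (r + l)) e₀ hne with rfl | rfl
        · exact he₀ he
        · exact he₀ hnat
      -- u_l occurs somewhere; after it ω is forced to follow P forever
      obtain ⟨j, hj⟩ := mem_Fac_iff.mp (hPfac 0 l)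
      have hocc : ∀ i, i < l → ω (j + i) = P i := by
        intro i hi
        have := blk_eq_iff.mp hj.symm i hi
        rw [Nat.zero_add] at this
        exact this
      have hforced : ∀ i, ω (j + i) = P i := by
        intro i
        induction i using Nat.strong_induction_on with
        | _ i ih =>
          rcases Nat.lt_or_ge i l with hil | hil
          · exact hocc i hil
          · set r : ℕ := i - l with hr
            have hW : blk ω (j + r) (l + 1) ∈ Fac ω (l+1) := blk_mem_Fac ω _ _
            have hWeq : blk ω (j + r) (l+1) = blk P r l ++ [ω (j + i)] := by
              rw [blk_succ]
              congr 1
              · apply blk_congr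
                intro t ht
                have e1 : j + r + t = j + (r + t) := by omega
                rw [e1]
                exact ih (r + t) (by omega)
              · have e2 : j + r + l = j + i := by omega
                rw [e2]
            rw [hWeq] at hW
            have := hforce r _ hW
            rw [this]
            congr 1; omega
      apply hap
      refine ⟨q₀, hq₀pos, j, fun n hn => ?_⟩
      have h1 := hforced (n - j)
      have h2 := hforced (n - j + q₀)
      have e1 : j + (n - j) = n := by omega
      have e2 : j + (n - j + q₀) = n + q₀ := by omega
      rw [e1] at h1; rw [e2] at h2
      rw [h1, h2, hq₀per]
    -- Claim A: the defect word forces P afterwards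
    have hA : ∀ k, n₁ ≤ k → ∀ e : Fin 2,
        (γ :: blk P 0 k) ++ [e] ∈ Fac ω (k+2) → e = P k := by
      intro k hk e he
      by_contra hne
      -- γ :: u_k is right special
      have hγk : ∀ e' : Fin 2, (γ :: blk P 0 k) ++ [e'] ∈ Fac ω (k+2) := by
        intro e'
        have hnat : (γ :: blk P 0 k) ++ [P k] ∈ Fac ω (k+2) := by
          have := hγfac (k+1)
          rw [blk_succ, Nat.zero_add] at this
          rw [List.cons_append]
          exact this
        rcases fin2_cover e (P k) e' hne with rfl | rfl
        · exact he
        · exact hnat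
      obtain ⟨r, hr⟩ := hB (k+1)
      -- the two right special words are distinct
      have hnever : (γ :: blk P 0 k) ≠ blk P r (k+1) := by
        intro heq
        rw [blk_cons] at heq
        have h1 : γ = P r := (List.cons.injEq _ _ _ _ ▸ heq).1
        have h2 : blk P 0 k = blk P (r+1) k := (List.cons.injEq _ _ _ _ ▸ heq).2
        have h3 : ∀ i, i < k → P (r + 1 + i) = P i := by
          intro i hi
          have := blk_eq_iff.mp h2.symm i hi
          rwa [Nat.zero_add] at this
        have h4 : (r + 1) % q₀ = 0 := hpin (r+1) k hk h3
        -- so P r = P (q₀ - 1)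
        have h5 : P r = P (q₀ - 1) := by
          obtain ⟨d, hd⟩ : q₀ ∣ (r + 1) := Nat.dvd_of_mod_eq_zero h4
          have hd1 : 1 ≤ d := by
            rcases Nat.eq_zero_or_pos d with rfl | h
            · omega
            · exact h
          have hmul : q₀ * d = q₀ * (d - 1) + q₀ := by
            have hdd : d = (d - 1) + 1 := by omega
            nth_rewrite 1 [hdd]; ring
          have e3 : r = (q₀ - 1) + q₀ * (d - 1) := by omega
          rw [e3, period_mul hq₀per]
        exact hγδ (h1.trans h5)
      exact no_two_right_special hst (by simp) (by simp) hnever hγk hr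
    -- conclusion: after an occurrence of γ :: u_{n₁}, ω follows P forever
    obtain ⟨j, hj⟩ := mem_Fac_iff.mp (hγfac n₁)
    rw [blk_cons] at hj
    have hj1 : γ = ω j := (List.cons.injEq _ _ _ _ ▸ hj).1
    have hj2 : blk P 0 n₁ = blk ω (j+1) n₁ := (List.cons.injEq _ _ _ _ ▸ hj).2
    have hocc : ∀ i, i < n₁ → ω (j + 1 + i) = P i := by
      intro i hi
      have := blk_eq_iff.mp hj2 i hi
      rw [Nat.zero_add] at this
      exact this.symm
    have hforced : ∀ i, ω (j + 1 + i) = P i := by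
      intro i
      induction i using Nat.strong_induction_on with
      | _ i ih =>
        rcases Nat.lt_or_ge i n₁ with hil | hil
        · exact hocc i hil
        · have hW : blk ω j (i + 2) ∈ Fac ω (i+2) := blk_mem_Fac ω _ _
          have hWeq : blk ω j (i + 2) = (γ :: blk P 0 i) ++ [ω (j + 1 + i)] := by
            rw [blk_cons, blk_succ, List.cons_append]
            congr 1
            · exact hj1.symm
            · congr 1
              apply blk_congr
              intro t ht
              rw [Nat.zero_add]
              exact ih t (by omega)
          rw [hWeq] at hW
          exact hA i hil _ hW
    apply hap
    refine ⟨q₀, hq₀pos, j + 1, fun n hn => ?_⟩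
    have h1 := hforced (n - (j+1))
    have h2 := hforced (n - (j+1) + q₀)
    have e1 : j + 1 + (n - (j+1)) = n := by omega
    have e2 : j + 1 + (n - (j+1) + q₀) = n + q₀ := by omega
    rw [e1] at h1; rw [e2] at h2
    rw [h1, h2, hq₀per]
  · -- non-degenerate case: two distinct left special factors; use Morse–Hedlund
    push_neg at hper
    obtain ⟨i₀, hi₀⟩ := hper
    set n : ℕ := i₀ + 1 with hn
    have hneq : blk a (m+1) n ≠ blk a (p+1) n := by
      intro heq
      exact hi₀ (blk_eq_iff.mp heq i₀ (by omega))
    have hshift := two_left_special_shift hst (by simp) (by simp) hneq (hLu n) (hLv n)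
    exact hap (ultPeriodic_of_shift (morse_hedlund hshift))

lemma maxdiff {f g : ℕ → Fin 2} {n₀ : ℕ} (hne : f ≠ g)
    (hag : ∀ i, n₀ ≤ i → f i = g i) :
    ∃ d, f d ≠ g d ∧ ∀ i, d < i → f i = g i := by
  classical
  set D := (Finset.range n₀).filter (fun i => f i ≠ g i) with hD
  have hDne : D.Nonempty := by
    have hex : ∃ i, f i ≠ g i := by
      by_contra h; push_neg at h; exact hne (funext h)
    obtain ⟨i, hi⟩ := hex
    have hilt : i < n₀ := by
      by_contra h; exact hi (hag i (by omega))
    exact ⟨i, Finset.mem_filter.mpr ⟨Finset.mem_range.mpr hilt, hi⟩⟩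
  refine ⟨D.max' hDne, (Finset.mem_filter.mp (D.max'_mem hDne)).2, ?_⟩
  intro i hdi
  by_contra hne2
  have hilt : i < n₀ := by
    by_contra h; exact hne2 (hag i (by omega))
  have hmem : i ∈ D := Finset.mem_filter.mpr ⟨Finset.mem_range.mpr hilt, hne2⟩
  have := D.le_max' i hmem
  omega

end Sturm

theorem stmt_15 (ω : ℕ → Fin 2)
    (hap : ¬ UltPeriodic ω) (hst : ∀ n, Complexity ω n = n + 1)
    (x y z : ℕ → Fin 2)
    (hx : ∀ u : List (Fin 2), IsPref u x → IsFactor u ω)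
    (hy : ∀ u : List (Fin 2), IsPref u y → IsFactor u ω)
    (hz : ∀ u : List (Fin 2), IsPref u z → IsFactor u ω)
    (n₀ : ℕ) (hn₀ : 1 ≤ n₀)
    (hxy : ∀ n, x (n + n₀) = y (n + n₀))
    (hxz : ∀ n, x (n + n₀) = z (n + n₀)) :
    x = y ∨ x = z ∨ y = z := by
  by_contra h
  push_neg at h
  obtain ⟨hxy', hxz', hyz'⟩ := h
  have axy : ∀ i, n₀ ≤ i → x i = y i := fun i hi => by
    have := hxy (i - n₀); rwa [Nat.sub_add_cancel hi] at this
  have axz : ∀ i, n₀ ≤ i → x i = z i := fun i hi => by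
    have := hxz (i - n₀); rwa [Nat.sub_add_cancel hi] at this
  have ayz : ∀ i, n₀ ≤ i → y i = z i := fun i hi => (axy i hi).symm.trans (axz i hi)
  obtain ⟨m₁, d₁, u₁⟩ := Sturm.maxdiff hxy' axy
  obtain ⟨m₂, d₂, u₂⟩ := Sturm.maxdiff hxz' axz
  obtain ⟨m₃, d₃, u₃⟩ := Sturm.maxdiff hyz' ayz
  set m : ℕ := max m₁ (max m₂ m₃) with hm
  have hle1 : m₁ ≤ m := le_max_left _ _
  have hle2 : m₂ ≤ m := le_trans (le_max_left _ _) (le_max_right _ _)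
  have hle3 : m₃ ≤ m := le_trans (le_max_right _ _) (le_max_right _ _)
  have habove_xy : ∀ i, m < i → x i = y i := fun i hi => u₁ i (by omega)
  have habove_xz : ∀ i, m < i → x i = z i := fun i hi => u₂ i (by omega)
  have habove_yz : ∀ i, m < i → y i = z i := fun i hi => u₃ i (by omega)
  by_cases h1 : x m = y m
  · have hm1 : m₁ ≠ m := fun hh => d₁ (hh ▸ h1)
    have hzm : z m ≠ x m := by
      have hmor : m = m₂ ∨ m = m₃ := by omega
      rcases hmor with hh | hh
      · exact fun hc => d₂ (by rw [← hh]; exact hc.symm)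
      · exact fun hc => d₃ (by rw [← hh]; exact (h1.symm.trans hc.symm))
    exact Sturm.key ω hap hst x y z hx hy hz m₁ m (by omega) d₁ u₁
      (fun hc => hzm hc.symm) habove_xz
  · rcases Sturm.fin2_cover (x m) (y m) (z m) h1 with h2 | h2
    · have hm2 : m₂ ≠ m := fun hh => d₂ (by rw [hh]; exact h2.symm)
      exact Sturm.key ω hap hst x z y hx hz hy m₂ m (by omega) d₂ u₂ h1 habove_xy
    · have hm3 : m₃ ≠ m := fun hh => d₃ (by rw [hh]; exact h2.symm)
      exact Sturm.key ω hap hst y z x hy hz hx m₃ m (by omega) d₃ u₃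
        (fun hc => h1 hc.symm) (fun i hi => (habove_xy i hi).symm)
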